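/- Let G₃ = ⟨g₁, g₂, g₃ ∣ g₂g₁ = g₁^{-1}g₂, g₃g₁ = g₁g₃, g₃g₂ = g₁g₂^{-1}g₃⟩. A map ψ : G₃ → G₃ is an automorphism if and only if there exist a, b, c ∈ ℤ and ε₁, ε₂, ε₃ ∈ {1, -1} such that ψ(g₁) = g₁^{ε₁}, ψ(g₂) = g₁^{a} g₂^{ε₂}, and ψ(g₃) = g₁^{b} g₂^{2c} g₃^{ε₃}. -/

import Mathlib

/-- The relators `g₂g₁g₂⁻¹g₁`, `g₃g₁g₃⁻¹g₁⁻¹`, `g₃g₂g₃⁻¹g₂g₁⁻¹` presenting the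
group `⟨g₁, g₂, g₃ ∣ g₂g₁ = g₁⁻¹g₂, g₃g₁ = g₁g₃, g₃g₂ = g₁g₂⁻¹g₃⟩`. -/
def polyZRelsA1 : Set (FreeGroup (Fin 3)) :=
  {FreeGroup.of 1 * FreeGroup.of 0 * (FreeGroup.of 1)⁻¹ * FreeGroup.of 0,
   FreeGroup.of 2 * FreeGroup.of 0 * (FreeGroup.of 2)⁻¹ * (FreeGroup.of 0)⁻¹,
   FreeGroup.of 2 * FreeGroup.of 1 * (FreeGroup.of 2)⁻¹ * FreeGroup.of 1 * (FreeGroup.of 0)⁻¹}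

namespace PolyZAux

/-- parity bit of an integer: 0 or 1 -/
def ob (n : ℤ) : ℤ := n % 2

/-- sign (-1)^n as an integer -/
def sg (n : ℤ) : ℤ := 1 - 2 * (n % 2)

lemma em (n : ℤ) : n % 2 = 0 ∨ n % 2 = 1 := Int.emod_two_eq n

lemma sg_eq (n : ℤ) : sg n = 1 ∨ sg n = -1 := by unfold sg; rcases em n with h | h <;> omega

@[simp] lemma sg_zero : sg 0 = 1 := rfl
@[simp] lemma ob_zero : ob 0 = 0 := rfl
@[simp] lemma sg_one : sg 1 = -1 := rfl
@[simp] lemma ob_one : ob 1 = 1 := rfl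

lemma sg_add (m n : ℤ) : sg (m + n) = sg m * sg n := by
  rcases em m with h | h <;> rcases em n with h' | h' <;> simp [sg, h, h'] <;> omega

lemma ob_add (m n : ℤ) : ob (m + n) = ob m + sg m * ob n := by
  rcases em m with h | h <;> rcases em n with h' | h' <;> simp [sg, ob, h, h'] <;> omega

lemma sg_neg (n : ℤ) : sg (-n) = sg n := by unfold sg; omega

lemma ob_neg (n : ℤ) : ob (-n) = ob n := by unfold ob; omega

lemma sg_sg_mul (s n : ℤ) (hs : s = 1 ∨ s = -1) : sg (s * n) = sg n := by
  rcases hs with h | h <;> subst h <;> simp [sg_neg]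

lemma ob_sg_mul (s n : ℤ) (hs : s = 1 ∨ s = -1) : ob (s * n) = ob n := by
  rcases hs with h | h <;> subst h <;> simp [ob_neg]

lemma sg_mul_self (n : ℤ) : sg n * sg n = 1 := by
  rcases sg_eq n with h | h <;> rw [h] <;> norm_num

lemma ob_add_one (n : ℤ) : ob (n + 1) = ob n + sg n := by unfold ob sg; omega

lemma ob_sub_one (n : ℤ) : ob (n - 1) = ob n + sg n := by unfold ob sg; omega

lemma sg_add_one (n : ℤ) : sg (n + 1) = -sg n := by unfold sg; omega

lemma sg_sub_one (n : ℤ) : sg (n - 1) = -sg n := by unfold sg; omega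

lemma sg_even {n : ℤ} (h : n % 2 = 0) : sg n = 1 := by unfold sg; omega
lemma sg_odd {n : ℤ} (h : n % 2 = 1) : sg n = -1 := by unfold sg; omega
lemma ob_even {n : ℤ} (h : n % 2 = 0) : ob n = 0 := h
lemma ob_odd {n : ℤ} (h : n % 2 = 1) : ob n = 1 := h

/-- The concrete model of `G₃`: `ℤ³` with twisted multiplication. -/
@[ext] structure GG where
  x : ℤ
  y : ℤ
  z : ℤ

namespace GG

instance : One GG := ⟨⟨0, 0, 0⟩⟩
instance : Mul GG := ⟨fun p q => ⟨p.x + sg p.y * (q.x + p.z * ob q.y), p.y + sg p.z * q.y, p.z + q.z⟩⟩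
instance : Inv GG := ⟨fun p => ⟨-(sg p.y * p.x) - p.z * ob p.y, -(sg p.z * p.y), -p.z⟩⟩

lemma mul_def (p q : GG) :
    p * q = ⟨p.x + sg p.y * (q.x + p.z * ob q.y), p.y + sg p.z * q.y, p.z + q.z⟩ := rfl
lemma inv_def (p : GG) : p⁻¹ = ⟨-(sg p.y * p.x) - p.z * ob p.y, -(sg p.z * p.y), -p.z⟩ := rfl
lemma one_def : (1 : GG) = ⟨0, 0, 0⟩ := rfl

instance : Group GG where
  mul_assoc p q r := by
    ext <;> simp only [mul_def]
    · rw [sg_add, sg_sg_mul _ _ (sg_eq _), ob_add, ob_sg_mul _ _ (sg_eq _)]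
      ring
    · rw [sg_add]
      ring
    · ring
  one_mul p := by ext <;> simp [mul_def, one_def]
  mul_one p := by ext <;> simp [mul_def, one_def]
  inv_mul_cancel p := by
    ext <;> simp only [mul_def, inv_def, one_def]
    · rw [sg_neg, sg_sg_mul _ _ (sg_eq _)]
      rcases em p.y with h | h
      · rw [ob_even h]; ring
      · rw [ob_odd h, sg_odd h]; ring
    · rw [sg_neg]; ring
    · ring


def X : GG := ⟨1, 0, 0⟩
def Y : GG := ⟨0, 1, 0⟩
def Z : GG := ⟨0, 0, 1⟩

lemma X_zpow (n : ℤ) : X ^ n = ⟨n, 0, 0⟩ := by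
  induction n using Int.induction_on with
  | zero => rfl
  | succ k ih => rw [zpow_add_one, ih]; ext <;> simp [mul_def, X]
  | pred k ih => rw [zpow_sub_one, ih]; ext <;> simp [mul_def, inv_def, X] <;> ring

lemma Y_zpow (n : ℤ) : Y ^ n = ⟨0, n, 0⟩ := by
  induction n using Int.induction_on with
  | zero => rfl
  | succ k ih => rw [zpow_add_one, ih]; ext <;> simp [mul_def, Y]
  | pred k ih => rw [zpow_sub_one, ih]; ext <;> simp [mul_def, inv_def, Y, sg_neg] <;> ring

lemma Z_zpow (n : ℤ) : Z ^ n = ⟨0, 0, n⟩ := by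
  induction n using Int.induction_on with
  | zero => rfl
  | succ k ih => rw [zpow_add_one, ih]; ext <;> simp [mul_def, Z]
  | pred k ih => rw [zpow_sub_one, ih]; ext <;> simp [mul_def, inv_def, Z] <;> ring

lemma coords (x y z : ℤ) : (⟨x, y, z⟩ : GG) = X ^ x * Y ^ y * Z ^ z := by
  rw [X_zpow, Y_zpow, Z_zpow]; ext <;> simp [mul_def]

end GG

@[simp] lemma sg_neg_one : sg (-1) = -1 := rfl
@[simp] lemma ob_neg_one : ob (-1) = 1 := rfl

abbrev P := PresentedGroup polyZRelsA1

def q1 : P := PresentedGroup.of 0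
def q2 : P := PresentedGroup.of 1
def q3 : P := PresentedGroup.of 2

lemma mk_rel {r : FreeGroup (Fin 3)} (h : r ∈ polyZRelsA1) :
    PresentedGroup.mk polyZRelsA1 r = 1 :=
  (QuotientGroup.eq_one_iff r).mpr (Subgroup.subset_normalClosure h)

lemma memA : (FreeGroup.of 1 * FreeGroup.of 0 * (FreeGroup.of 1)⁻¹ * FreeGroup.of 0 :
    FreeGroup (Fin 3)) ∈ polyZRelsA1 := Set.mem_insert _ _
lemma memB : (FreeGroup.of 2 * FreeGroup.of 0 * (FreeGroup.of 2)⁻¹ * (FreeGroup.of 0)⁻¹ :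
    FreeGroup (Fin 3)) ∈ polyZRelsA1 := Set.mem_insert_iff.mpr (Or.inr (Set.mem_insert _ _))
lemma memC : (FreeGroup.of 2 * FreeGroup.of 1 * (FreeGroup.of 2)⁻¹ * FreeGroup.of 1 *
    (FreeGroup.of 0)⁻¹ : FreeGroup (Fin 3)) ∈ polyZRelsA1 :=
  Set.mem_insert_iff.mpr (Or.inr (Set.mem_insert_iff.mpr (Or.inr rfl)))

lemma rel1 : q2 * q1 * q2⁻¹ * q1 = 1 := by
  have h := mk_rel memA
  simpa [map_mul, map_inv, q1, q2, q3, PresentedGroup.of] using h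

lemma rel2 : q3 * q1 * q3⁻¹ * q1⁻¹ = 1 := by
  have h := mk_rel memB
  simpa [map_mul, map_inv, q1, q2, q3, PresentedGroup.of] using h

lemma rel3 : q3 * q2 * q3⁻¹ * q2 * q1⁻¹ = 1 := by
  have h := mk_rel memC
  simpa [map_mul, map_inv, q1, q2, q3, PresentedGroup.of] using h

lemma c21 : q2 * q1 * q2⁻¹ = q1⁻¹ := eq_inv_of_mul_eq_one_left rel1

lemma c31 : q3 * q1 * q3⁻¹ = q1 := by
  have h := rel2
  rw [mul_inv_eq_one] at h
  exact h

lemma c32 : q3 * q2 * q3⁻¹ = q1 * q2⁻¹ := by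
  have h := rel3
  rw [mul_inv_eq_one] at h
  calc q3 * q2 * q3⁻¹ = q3 * q2 * q3⁻¹ * q2 * q2⁻¹ := by group
    _ = q1 * q2⁻¹ := by rw [h]

lemma comm13 : q3 * q1 = q1 * q3 := mul_inv_eq_iff_eq_mul.mp c31

lemma p21 (x : ℤ) : q2 * q1 ^ x * q2⁻¹ = q1 ^ (-x) := by
  rw [← conj_zpow, c21, inv_zpow, zpow_neg]

lemma p12 (x : ℤ) : q2 * q1 ^ x = q1 ^ (-x) * q2 := by
  have h := p21 x
  rwa [mul_inv_eq_iff_eq_mul] at h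

lemma p12' (x : ℤ) : q2⁻¹ * q1 ^ x = q1 ^ (-x) * q2⁻¹ := by
  have h := p12 (-x)
  rw [neg_neg] at h
  calc q2⁻¹ * q1 ^ x = q2⁻¹ * (q1 ^ x * q2) * q2⁻¹ := by group
    _ = q2⁻¹ * (q2 * q1 ^ (-x)) * q2⁻¹ := by rw [← h]
    _ = q1 ^ (-x) * q2⁻¹ := by group

lemma P1'aux (y : ℤ) : ∀ x : ℤ, q2 ^ y * q1 ^ x = q1 ^ (sg y * x) * q2 ^ y := by
  induction y using Int.induction_on with
  | zero => intro x; simp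
  | succ k ih =>
    intro x
    calc q2 ^ ((k : ℤ) + 1) * q1 ^ x = q2 ^ (k : ℤ) * q1 ^ (-x) * q2 := by
          rw [zpow_add_one, mul_assoc, p12, ← mul_assoc]
      _ = (q1 ^ (sg (k : ℤ) * (-x)) * q2 ^ (k : ℤ)) * q2 := by rw [ih (-x)]
      _ = q1 ^ (sg ((k : ℤ) + 1) * x) * q2 ^ ((k : ℤ) + 1) := by
          rw [sg_add_one]; rw [show -sg (k : ℤ) * x = sg (k : ℤ) * (-x) by ring]; group
  | pred k ih =>
    intro x
    calc q2 ^ (-(k : ℤ) - 1) * q1 ^ x = q2 ^ (-(k : ℤ)) * q1 ^ (-x) * q2⁻¹ := by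
          rw [zpow_sub_one, mul_assoc, p12', ← mul_assoc]
      _ = (q1 ^ (sg (-(k : ℤ)) * (-x)) * q2 ^ (-(k : ℤ))) * q2⁻¹ := by rw [ih (-x)]
      _ = q1 ^ (sg (-(k : ℤ) - 1) * x) * q2 ^ (-(k : ℤ) - 1) := by
          rw [sg_sub_one]; rw [show -sg (-(k : ℤ)) * x = sg (-(k : ℤ)) * (-x) by ring]; group

lemma P1' (y x : ℤ) : q2 ^ y * q1 ^ x = q1 ^ (sg y * x) * q2 ^ y := P1'aux y x

lemma comm (x z : ℤ) : q3 ^ z * q1 ^ x = q1 ^ x * q3 ^ z :=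
  ((Commute.zpow_zpow (a := q3) (b := q1) comm13 z x)).eq

lemma c32' : q3 * q2 = q1 * q2⁻¹ * q3 := mul_inv_eq_iff_eq_mul.mp c32

lemma h21a : q2 * q1⁻¹ = q1 * q2 := by have := p12 (-1); simpa using this
lemma h21b : q2⁻¹ * q1 = q1⁻¹ * q2⁻¹ := by have := p12' 1; simpa using this
lemma h31a : q3 * q1⁻¹ * q3⁻¹ = q1⁻¹ := by
  have h : q3 * q1⁻¹ = q1⁻¹ * q3 := by have := comm (-1) 1; simpa using this
  rw [h]; group

lemma c32inv : q3⁻¹ * q2 * q3 = q1⁻¹ * q2⁻¹ := by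
  have key : q3 * (q1⁻¹ * q2⁻¹) * q3⁻¹ = q2 := by
    calc q3 * (q1⁻¹ * q2⁻¹) * q3⁻¹ = (q3 * q1⁻¹ * q3⁻¹) * (q3 * q2 * q3⁻¹)⁻¹ := by group
      _ = q1⁻¹ * (q1 * q2⁻¹)⁻¹ := by rw [h31a, c32]
      _ = q1⁻¹ * (q2 * q1⁻¹) := by group
      _ = q1⁻¹ * (q1 * q2) := by rw [h21a]
      _ = q2 := by group
  calc q3⁻¹ * q2 * q3 = q3⁻¹ * (q3 * (q1⁻¹ * q2⁻¹) * q3⁻¹) * q3 := by rw [key]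
    _ = q1⁻¹ * q2⁻¹ := by group

lemma S3c (z : ℤ) : q3 ^ z * q2 * q3 ^ (-z) = q1 ^ z * q2 ^ (sg z) := by
  induction z using Int.induction_on with
  | zero => simp
  | succ k ih =>
    have step : q3 ^ ((k : ℤ) + 1) * q2 * q3 ^ (-((k : ℤ) + 1)) =
        q3 * (q3 ^ (k : ℤ) * q2 * q3 ^ (-(k : ℤ))) * q3⁻¹ := by group
    rw [step, ih]
    calc q3 * (q1 ^ (k : ℤ) * q2 ^ sg (k : ℤ)) * q3⁻¹
        = (q3 * q1 ^ (k : ℤ) * q3⁻¹) * (q3 * q2 ^ sg (k : ℤ) * q3⁻¹) := by group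
      _ = q1 ^ (k : ℤ) * (q3 * q2 * q3⁻¹) ^ sg (k : ℤ) := by
          rw [conj_zpow, show q3 * q1 ^ (k : ℤ) * q3⁻¹ = q1 ^ (k : ℤ) by
            rw [show q3 * q1 ^ (k : ℤ) = q1 ^ (k : ℤ) * q3 by
              have := comm (k : ℤ) 1; simpa using this]; group]
      _ = q1 ^ (k : ℤ) * (q1 * q2⁻¹) ^ sg (k : ℤ) := by rw [c32]
      _ = q1 ^ ((k : ℤ) + 1) * q2 ^ sg ((k : ℤ) + 1) := by
          rcases sg_eq (k : ℤ) with h | h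
          · rw [sg_add_one, h]; group
          · rw [sg_add_one, h]
            have e : ((q1 * q2⁻¹ : P)) ^ (-1 : ℤ) = q2 * q1⁻¹ := by group
            rw [e, h21a]; group
  | pred k ih =>
    have step : q3 ^ (-(k : ℤ) - 1) * q2 * q3 ^ (-(-(k : ℤ) - 1)) =
        q3⁻¹ * (q3 ^ (-(k : ℤ)) * q2 * q3 ^ (-(-(k : ℤ)))) * q3 := by group
    rw [step, ih]
    calc q3⁻¹ * (q1 ^ (-(k : ℤ)) * q2 ^ sg (-(k : ℤ))) * q3
        = (q3⁻¹ * q1 ^ (-(k : ℤ)) * q3) * (q3⁻¹ * q2 ^ sg (-(k : ℤ)) * q3) := by group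
      _ = q1 ^ (-(k : ℤ)) * (q3⁻¹ * q2 * q3) ^ sg (-(k : ℤ)) := by
          rw [show (q3⁻¹ * q2 * q3 : P) ^ sg (-(k : ℤ)) = q3⁻¹ * q2 ^ sg (-(k : ℤ)) * q3 by
              have := conj_zpow (i := sg (-(k : ℤ))) (a := q3⁻¹) (b := q2); simpa using this,
            show q3⁻¹ * q1 ^ (-(k : ℤ)) * q3 = q1 ^ (-(k : ℤ)) by
              rw [show q3⁻¹ * q1 ^ (-(k : ℤ)) = q1 ^ (-(k : ℤ)) * q3⁻¹ by
                have := (comm (-(k : ℤ)) (-1)); simpa using this]; group]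
      _ = q1 ^ (-(k : ℤ)) * (q1⁻¹ * q2⁻¹) ^ sg (-(k : ℤ)) := by rw [c32inv]
      _ = q1 ^ (-(k : ℤ) - 1) * q2 ^ sg (-(k : ℤ) - 1) := by
          rcases sg_eq (-(k : ℤ)) with h | h
          · rw [sg_sub_one, h]; group
          · rw [sg_sub_one, h]
            have e : ((q1⁻¹ * q2⁻¹ : P)) ^ (-1 : ℤ) = q2 * q1 := by group
            have e2 : (q2 * q1 : P) = q1⁻¹ * q2 := by have := p12 1; simpa using this
            rw [e, e2]; group

lemma sg_pm {e : ℤ} (he : e = 1 ∨ e = -1) : sg e = -1 ∧ sg (-e) = -1 ∧ ob e = 1 := by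
  rcases he with rfl | rfl <;> refine ⟨rfl, rfl, rfl⟩

lemma S4 (m e : ℤ) (he : e = 1 ∨ e = -1) (y : ℤ) :
    (q1 ^ m * q2 ^ e) ^ y = q1 ^ (m * ob y) * q2 ^ (e * y) := by
  induction y using Int.induction_on with
  | zero => simp
  | succ k ih =>
    have step : (q1 ^ m * q2 ^ e) ^ ((k : ℤ) + 1) =
        (q1 ^ m * q2 ^ e) ^ (k : ℤ) * (q1 ^ m * q2 ^ e) := zpow_add_one _ _
    rw [step, ih]
    calc q1 ^ (m * ob (k : ℤ)) * q2 ^ (e * (k : ℤ)) * (q1 ^ m * q2 ^ e)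
        = q1 ^ (m * ob (k : ℤ)) * (q2 ^ (e * (k : ℤ)) * q1 ^ m) * q2 ^ e := by group
      _ = q1 ^ (m * ob (k : ℤ)) * (q1 ^ (sg (e * (k : ℤ)) * m) * q2 ^ (e * (k : ℤ))) * q2 ^ e := by
          rw [P1']
      _ = q1 ^ (m * ob ((k : ℤ) + 1)) * q2 ^ (e * ((k : ℤ) + 1)) := by
          rw [ob_add_one, sg_sg_mul e (k : ℤ) he,
            show m * (ob (k : ℤ) + sg (k : ℤ)) = m * ob (k : ℤ) + sg (k : ℤ) * m by ring,
            show e * ((k : ℤ) + 1) = e * (k : ℤ) + e by ring]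
          group
  | pred k ih =>
    have winv : (q1 ^ m * q2 ^ e)⁻¹ = q1 ^ m * q2 ^ (-e) := by
      calc (q1 ^ m * q2 ^ e)⁻¹ = q2 ^ (-e) * q1 ^ (-m) := by group
        _ = q1 ^ (sg (-e) * (-m)) * q2 ^ (-e) := by rw [P1']
        _ = q1 ^ m * q2 ^ (-e) := by rw [(sg_pm he).2.1]; ring_nf
    have step : (q1 ^ m * q2 ^ e) ^ (-(k : ℤ) - 1) =
        (q1 ^ m * q2 ^ e) ^ (-(k : ℤ)) * (q1 ^ m * q2 ^ e)⁻¹ := zpow_sub_one _ _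
    rw [step, ih, winv]
    calc q1 ^ (m * ob (-(k : ℤ))) * q2 ^ (e * (-(k : ℤ))) * (q1 ^ m * q2 ^ (-e))
        = q1 ^ (m * ob (-(k : ℤ))) * (q2 ^ (e * (-(k : ℤ))) * q1 ^ m) * q2 ^ (-e) := by group
      _ = q1 ^ (m * ob (-(k : ℤ))) *
            (q1 ^ (sg (e * (-(k : ℤ))) * m) * q2 ^ (e * (-(k : ℤ)))) * q2 ^ (-e) := by rw [P1']
      _ = q1 ^ (m * ob (-(k : ℤ) - 1)) * q2 ^ (e * (-(k : ℤ) - 1)) := by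
          rw [ob_sub_one, sg_sg_mul e (-(k : ℤ)) he, ob_neg, sg_neg,
            show m * (ob (k : ℤ) + sg (k : ℤ)) = m * ob (k : ℤ) + sg (k : ℤ) * m by ring,
            show e * (-(k : ℤ) - 1) = e * (-(k : ℤ)) + (-e) by ring]
          group

lemma P3 (z y : ℤ) : q3 ^ z * q2 ^ y = q1 ^ (z * ob y) * q2 ^ (sg z * y) * q3 ^ z := by
  have h2 : q3 ^ z * q2 ^ y * (q3 ^ z)⁻¹ = (q3 ^ z * q2 * (q3 ^ z)⁻¹) ^ y := (conj_zpow).symm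
  rw [show ((q3 ^ z)⁻¹ : P) = q3 ^ (-z) by group] at h2
  rw [S3c, S4 z (sg z) (sg_eq z) y] at h2
  calc q3 ^ z * q2 ^ y = (q3 ^ z * q2 ^ y * q3 ^ (-z)) * q3 ^ z := by group
    _ = q1 ^ (z * ob y) * q2 ^ (sg z * y) * q3 ^ z := by rw [h2]

lemma nf_mul (x y z x' y' z' : ℤ) :
    (q1 ^ x * q2 ^ y * q3 ^ z) * (q1 ^ x' * q2 ^ y' * q3 ^ z') =
      q1 ^ (x + sg y * (x' + z * ob y')) * q2 ^ (y + sg z * y') * q3 ^ (z + z') := by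
  calc (q1 ^ x * q2 ^ y * q3 ^ z) * (q1 ^ x' * q2 ^ y' * q3 ^ z')
      = q1 ^ x * q2 ^ y * ((q3 ^ z * q1 ^ x') * q2 ^ y') * q3 ^ z' := by group
    _ = q1 ^ x * q2 ^ y * ((q1 ^ x' * q3 ^ z) * q2 ^ y') * q3 ^ z' := by rw [comm]
    _ = q1 ^ x * q2 ^ y * (q1 ^ x' * (q3 ^ z * q2 ^ y')) * q3 ^ z' := by group
    _ = q1 ^ x * q2 ^ y * (q1 ^ x' * (q1 ^ (z * ob y') * q2 ^ (sg z * y') * q3 ^ z)) * q3 ^ z' := by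
        rw [P3]
    _ = q1 ^ x * (q2 ^ y * q1 ^ (x' + z * ob y')) * q2 ^ (sg z * y') * (q3 ^ z * q3 ^ z') := by
        rw [show (q1 ^ x' * (q1 ^ (z * ob y') * q2 ^ (sg z * y') * q3 ^ z) : P) =
          q1 ^ (x' + z * ob y') * q2 ^ (sg z * y') * q3 ^ z by group]
        group
    _ = q1 ^ x * (q1 ^ (sg y * (x' + z * ob y')) * q2 ^ y) * q2 ^ (sg z * y') *
          (q3 ^ z * q3 ^ z') := by rw [P1']
    _ = q1 ^ (x + sg y * (x' + z * ob y')) * q2 ^ (y + sg z * y') * q3 ^ (z + z') := by group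

lemma nf_inv (x y z : ℤ) :
    (q1 ^ x * q2 ^ y * q3 ^ z)⁻¹ =
      q1 ^ (-(z * ob y) - sg y * x) * q2 ^ (-(sg z * y)) * q3 ^ (-z) := by
  calc (q1 ^ x * q2 ^ y * q3 ^ z)⁻¹ = (q3 ^ (-z) * q2 ^ (-y)) * q1 ^ (-x) := by group
    _ = q1 ^ ((-z) * ob (-y)) * q2 ^ (sg (-z) * (-y)) * q3 ^ (-z) * q1 ^ (-x) := by rw [P3]
    _ = q1 ^ ((-z) * ob (-y)) * q2 ^ (sg (-z) * (-y)) * (q3 ^ (-z) * q1 ^ (-x)) := by group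
    _ = q1 ^ ((-z) * ob (-y)) * (q2 ^ (sg (-z) * (-y)) * q1 ^ (-x)) * q3 ^ (-z) := by
        rw [comm]; group
    _ = q1 ^ ((-z) * ob (-y)) * (q1 ^ (sg (sg (-z) * (-y)) * (-x)) * q2 ^ (sg (-z) * (-y))) *
          q3 ^ (-z) := by rw [P1']
    _ = q1 ^ (-(z * ob y) - sg y * x) * q2 ^ (-(sg z * y)) * q3 ^ (-z) := by
        rw [ob_neg, sg_neg, sg_sg_mul (sg z) (-y) (sg_eq z), sg_neg,
          show -z * ob y = -(z * ob y) by ring,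
          show sg y * (-x) = -(sg y * x) by ring,
          show sg z * (-y) = -(sg z * y) by ring]
        group

lemma nf (p : P) : ∃ x y z : ℤ, p = q1 ^ x * q2 ^ y * q3 ^ z := by
  have hp : p ∈ Subgroup.closure (Set.range (PresentedGroup.of : Fin 3 → P)) := by
    rw [PresentedGroup.closure_range_of]; trivial
  induction hp using Subgroup.closure_induction with
  | mem g hg =>
    obtain ⟨i, rfl⟩ := hg
    fin_cases i
    · exact ⟨1, 0, 0, by simp [q1]⟩
    · exact ⟨0, 1, 0, by simp [q2]⟩
    · exact ⟨0, 0, 1, by simp [q3]⟩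
  | one => exact ⟨0, 0, 0, by simp⟩
  | mul g h _ _ ihg ihh =>
    obtain ⟨x, y, z, rfl⟩ := ihg
    obtain ⟨x', y', z', rfl⟩ := ihh
    exact ⟨_, _, _, nf_mul x y z x' y' z'⟩
  | inv g _ ihg =>
    obtain ⟨x, y, z, rfl⟩ := ihg
    exact ⟨_, _, _, nf_inv x y z⟩

@[simp] lemma sg_add' (m n : ℤ) : sg (m + n) = sg m * sg n := sg_add m n
@[simp] lemma ob_add' (m n : ℤ) : ob (m + n) = ob m + sg m * ob n := ob_add m n
@[simp] lemma sg_neg' (n : ℤ) : sg (-n) = sg n := sg_neg n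
@[simp] lemma ob_neg' (n : ℤ) : ob (-n) = ob n := ob_neg n
@[simp] lemma sg_sgmul (m n : ℤ) : sg (sg m * n) = sg n := sg_sg_mul _ _ (sg_eq m)
@[simp] lemma ob_sgmul (m n : ℤ) : ob (sg m * n) = ob n := ob_sg_mul _ _ (sg_eq m)
@[simp] lemma sg_two_mul (n : ℤ) : sg (2 * n) = 1 := by unfold sg; omega
@[simp] lemma ob_two_mul (n : ℤ) : ob (2 * n) = 0 := by unfold ob; omega
@[simp] lemma sg_mul_self' (n : ℤ) : sg n * sg n = 1 := sg_mul_self n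

/-- subgroup of `GG` given by a divisibility condition on the `z` coordinate -/
def Sz (d : ℤ) : Subgroup GG where
  carrier := {p | d ∣ p.z}
  mul_mem' := by
    intro p q hp hq
    simp only [Set.mem_setOf_eq] at *
    simpa [GG.mul_def] using dvd_add hp hq
  one_mem' := by simp [GG.one_def]
  inv_mem' := by
    intro p hp
    simp only [Set.mem_setOf_eq] at *
    simpa [GG.inv_def] using hp.neg_right

/-- subgroup of `GG` : `y ≡ c·ob z  mod b` -/
def Tsub (b c : ℤ) : Subgroup GG where
  carrier := {p | b ∣ p.y - c * ob p.z}
  mul_mem' := by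
    intro p q hp hq
    simp only [Set.mem_setOf_eq] at hp hq ⊢
    simp only [GG.mul_def, ob_add']
    convert dvd_add hp (hq.mul_left (sg p.z)) using 1
    rfl
    ring
  one_mem' := by simp [GG.one_def]
  inv_mem' := by
    intro p hp
    simp only [Set.mem_setOf_eq] at hp ⊢
    simp only [GG.inv_def, ob_neg']
    rcases em p.z with h | h
    · rw [sg_even h, ob_even h]
      rw [ob_even h] at hp
      convert hp.neg_right using 1
      rfl
      ring
    · rw [sg_odd h, ob_odd h]
      rw [ob_odd h] at hp
      convert hp using 1
      ring

/-- subgroup of `GG` : `sg y · x ≡ t z - s·ob y mod a`, for `a ∣ 2t+1` -/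
def Usub (a t s : ℤ) (ht : a ∣ 2 * t + 1) : Subgroup GG where
  carrier := {p | a ∣ sg p.y * p.x - t * p.z + s * ob p.y}
  mul_mem' := by
    intro p q hp hq
    simp only [Set.mem_setOf_eq] at hp hq ⊢
    simp only [GG.mul_def, ob_add', sg_add', sg_sgmul, ob_sgmul]
    rcases em q.y with h2 | h2
    · rw [sg_even h2, ob_even h2] at hq ⊢
      rcases em p.y with h1 | h1
      · rw [sg_even h1, ob_even h1] at hp ⊢
        convert dvd_add hp hq using 1; rfl; ring
      · rw [sg_odd h1, ob_odd h1] at hp ⊢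
        convert dvd_add hp hq using 1; rfl; ring
    · rw [sg_odd h2, ob_odd h2] at hq ⊢
      rcases em p.y with h1 | h1
      · rw [sg_even h1, ob_even h1] at hp ⊢
        convert dvd_add (dvd_add hp.neg_right hq) (ht.mul_left (-p.z)) using 1; rfl; ring
      · rw [sg_odd h1, ob_odd h1] at hp ⊢
        convert dvd_add (dvd_add hp.neg_right hq) (ht.mul_left (-p.z)) using 1; rfl; ring
  one_mem' := by simp [GG.one_def]
  inv_mem' := by
    intro p hp
    simp only [Set.mem_setOf_eq] at hp ⊢
    simp only [GG.inv_def, ob_neg', sg_neg', sg_sgmul, ob_sgmul]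
    rcases em p.y with h1 | h1
    · rw [sg_even h1, ob_even h1] at hp ⊢
      convert hp.neg_right using 1; rfl; ring
    · rw [sg_odd h1, ob_odd h1] at hp ⊢
      convert dvd_add hp (ht.mul_left p.z) using 1; rfl; ring

def fGG : Fin 3 → GG := ![GG.X, GG.Y, GG.Z]

lemma relcheck : ∀ r ∈ polyZRelsA1, FreeGroup.lift fGG r = 1 := by
  intro r hr
  simp only [polyZRelsA1, Set.mem_insert_iff, Set.mem_singleton_iff] at hr
  rcases hr with rfl | rfl | rfl <;>
    · simp only [map_mul, map_inv, FreeGroup.lift_apply_of, fGG, Matrix.cons_val_zero,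
        Matrix.cons_val_one, Matrix.head_cons, Matrix.cons_val_two, Matrix.tail_cons]
      ext <;> simp [GG.mul_def, GG.inv_def, GG.one_def, GG.X, GG.Y, GG.Z]
  
noncomputable def piZ : P →* GG := PresentedGroup.toGroup relcheck

lemma pi_q1 : piZ q1 = GG.X := by simp [piZ, q1, fGG]
lemma pi_q2 : piZ q2 = GG.Y := by simp [piZ, q2, fGG]
lemma pi_q3 : piZ q3 = GG.Z := by simp [piZ, q3, fGG]

lemma pi_nf (x y z : ℤ) : piZ (q1 ^ x * q2 ^ y * q3 ^ z) = ⟨x, y, z⟩ := by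
  rw [map_mul, map_mul, map_zpow, map_zpow, map_zpow, pi_q1, pi_q2, pi_q3]
  exact (GG.coords x y z).symm

lemma pi_inj : Function.Injective piZ := by
  intro p q h
  obtain ⟨x, y, z, rfl⟩ := nf p
  obtain ⟨x', y', z', rfl⟩ := nf q
  rw [pi_nf, pi_nf, GG.mk.injEq] at h
  obtain ⟨rfl, rfl, rfl⟩ := h
  rfl

lemma mem_Sz {d : ℤ} {p : GG} : p ∈ Sz d ↔ d ∣ p.z := Iff.rfl
lemma mem_Tsub {b c : ℤ} {p : GG} : p ∈ Tsub b c ↔ b ∣ p.y - c * ob p.z := Iff.rfl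
lemma mem_Usub {a t s : ℤ} {ht : a ∣ 2 * t + 1} {p : GG} :
    p ∈ Usub a t s ht ↔ a ∣ sg p.y * p.x - t * p.z + s * ob p.y := Iff.rfl

lemma pi_nf2 (x y : ℤ) : piZ (q1 ^ x * q2 ^ y) = ⟨x, y, 0⟩ := by
  have := pi_nf x y 0
  simpa using this

end PolyZAux

open PolyZAux in
theorem main_fwd
    (ψ : PresentedGroup polyZRelsA1 →* PresentedGroup polyZRelsA1)
    (hinj : Function.Injective ψ) (hsurj : Function.Surjective ψ) :
      ∃ (a b c ε₁ ε₂ ε₃ : ℤ), (ε₁ = 1 ∨ ε₁ = -1) ∧ (ε₂ = 1 ∨ ε₂ = -1) ∧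
        (ε₃ = 1 ∨ ε₃ = -1) ∧
        ψ q1 = q1 ^ ε₁ ∧ ψ q2 = q1 ^ a * q2 ^ ε₂ ∧
        ψ q3 = q1 ^ b * q2 ^ (2 * c) * q3 ^ ε₃ := by
  obtain ⟨a1, a2, a3, hA⟩ := nf (ψ q1)
  obtain ⟨b1, b2, b3, hB⟩ := nf (ψ q2)
  obtain ⟨c1, c2, c3, hC⟩ := nf (ψ q3)
  have pA : piZ (ψ q1) = ⟨a1, a2, a3⟩ := by rw [hA, pi_nf]
  have pB : piZ (ψ q2) = ⟨b1, b2, b3⟩ := by rw [hB, pi_nf]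
  have pC : piZ (ψ q3) = ⟨c1, c2, c3⟩ := by rw [hC, pi_nf]
  have R1 : ψ q2 * ψ q1 * (ψ q2)⁻¹ * ψ q1 = 1 := by
    simpa [map_mul, map_inv, map_one] using congrArg ψ rel1
  have R2 : ψ q3 * ψ q1 * (ψ q3)⁻¹ * (ψ q1)⁻¹ = 1 := by
    simpa [map_mul, map_inv, map_one] using congrArg ψ rel2
  have R3 : ψ q3 * ψ q2 * (ψ q3)⁻¹ * ψ q2 * (ψ q1)⁻¹ = 1 := by
    simpa [map_mul, map_inv, map_one] using congrArg ψ rel3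
  have E1 : (⟨b1, b2, b3⟩ : GG) * ⟨a1, a2, a3⟩ * (⟨b1, b2, b3⟩ : GG)⁻¹ * ⟨a1, a2, a3⟩ = 1 := by
    simpa [map_mul, map_inv, map_one, pA, pB] using congrArg piZ R1
  have E2 : (⟨c1, c2, c3⟩ : GG) * ⟨a1, a2, a3⟩ * (⟨c1, c2, c3⟩ : GG)⁻¹ *
      (⟨a1, a2, a3⟩ : GG)⁻¹ = 1 := by
    simpa [map_mul, map_inv, map_one, pA, pC] using congrArg piZ R2
  have E3 : (⟨c1, c2, c3⟩ : GG) * ⟨b1, b2, b3⟩ * (⟨c1, c2, c3⟩ : GG)⁻¹ * ⟨b1, b2, b3⟩ *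
      (⟨a1, a2, a3⟩ : GG)⁻¹ = 1 := by
    simpa [map_mul, map_inv, map_one, pA, pB, pC] using congrArg piZ R3
  have ha3 : a3 = 0 := by
    have h := congrArg GG.z E1
    simp [GG.mul_def, GG.inv_def, GG.one_def] at h
    omega
  subst ha3
  have hb3 : b3 = 0 := by
    have h := congrArg GG.z E3
    simp [GG.mul_def, GG.inv_def, GG.one_def] at h
    omega
  subst hb3
  have ha2 : a2 = 0 := by
    have h := congrArg GG.y E1
    simp [GG.mul_def, GG.inv_def, GG.one_def] at h
    omega
  subst ha2
  have ha1ne : a1 ≠ 0 := by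
    intro h0
    have h1 : ψ q1 = ψ 1 := by rw [map_one, hA, h0]; simp
    have h2 := congrArg piZ (hinj h1)
    rw [pi_q1, map_one] at h2
    have h3 := congrArg GG.x h2
    simp [GG.X, GG.one_def] at h3
  have img : ∀ (S : Subgroup GG), (⟨a1, 0, 0⟩ : GG) ∈ S → (⟨b1, b2, 0⟩ : GG) ∈ S →
      (⟨c1, c2, c3⟩ : GG) ∈ S → ∀ p : P, piZ (ψ p) ∈ S := by
    intro S hSA hSB hSC p
    obtain ⟨x, y, z, rfl⟩ := nf p
    have heq : piZ (ψ (q1 ^ x * q2 ^ y * q3 ^ z)) =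
        (⟨a1, 0, 0⟩ : GG) ^ x * (⟨b1, b2, 0⟩ : GG) ^ y * (⟨c1, c2, c3⟩ : GG) ^ z := by
      simp [map_mul, map_zpow, pA, pB, pC]
    rw [heq]
    exact mul_mem (mul_mem (zpow_mem hSA x) (zpow_mem hSB y)) (zpow_mem hSC z)
  have hc3 : c3 = 1 ∨ c3 = -1 := by
    obtain ⟨p, hp⟩ := hsurj q3
    have h := img (Sz c3) (by simp [mem_Sz]) (by simp [mem_Sz]) (by simp [mem_Sz]) p
    rw [hp, pi_q3] at h
    have h2 : c3 ∣ 1 := by simpa [mem_Sz, GG.Z] using h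
    exact Int.isUnit_iff.mp (isUnit_of_dvd_one h2)
  have hsgc3 : sg c3 = -1 := (sg_pm hc3).1
  have hobc3 : ob c3 = 1 := (sg_pm hc3).2.2
  have hc2e : c2 % 2 = 0 := by
    by_contra hodd
    have ho : c2 % 2 = 1 := by omega
    have h := congrArg GG.x E2
    simp [GG.mul_def, GG.inv_def, GG.one_def, sg_odd ho, ob_odd ho, hsgc3, hobc3] at h
    omega
  have hb2o : b2 % 2 = 1 := by
    by_contra heven
    have he : b2 % 2 = 0 := by omega
    have h := congrArg GG.x E1
    simp [GG.mul_def, GG.inv_def, GG.one_def, sg_even he, ob_even he] at h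
    omega
  have ha1eq : a1 = 2 * c1 + c3 := by
    have h := congrArg GG.x E3
    simp [GG.mul_def, GG.inv_def, GG.one_def, sg_even hc2e, ob_even hc2e, sg_odd hb2o,
      ob_odd hb2o, hsgc3, hobc3] at h
    omega
  have hb2 : b2 = 1 ∨ b2 = -1 := by
    obtain ⟨p, hp⟩ := hsurj q2
    have h := img (Tsub b2 c2)
      (by simp [mem_Tsub]) (by simp [mem_Tsub]) (by simp [mem_Tsub, hobc3]) p
    rw [hp, pi_q2] at h
    have h2 : b2 ∣ 1 := by simpa [mem_Tsub, GG.Y] using h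
    exact Int.isUnit_iff.mp (isUnit_of_dvd_one h2)
  have ht : a1 ∣ 2 * (c3 * c1) + 1 := by
    refine ⟨c3, ?_⟩
    rcases hc3 with rfl | rfl <;> omega
  have ha1pm : a1 = 1 ∨ a1 = -1 := by
    obtain ⟨p, hp⟩ := hsurj q1
    have h := img (Usub a1 (c3 * c1) b1 ht)
      (by simp [mem_Usub]) (by simp [mem_Usub, sg_odd hb2o, ob_odd hb2o])
      (by simp only [mem_Usub]
          rw [sg_even hc2e, ob_even hc2e]
          refine (dvd_iff_exists_eq_mul_left.mpr ⟨0, ?_⟩)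
          rcases hc3 with rfl | rfl <;> ring) p
    rw [hp, pi_q1] at h
    have h2 : a1 ∣ 1 := by simpa [mem_Usub, GG.X] using h
    exact Int.isUnit_iff.mp (isUnit_of_dvd_one h2)
  obtain ⟨cc, hcc⟩ : ∃ cc, c2 = 2 * cc := ⟨c2 / 2, by omega⟩
  refine ⟨b1, c1, cc, a1, b2, c3, ha1pm, hb2, hc3, ?_, ?_, ?_⟩
  · rw [hA]; simp
  · rw [hB]; simp
  · rw [hC, hcc]


open PolyZAux in
lemma GGS4 (m e : ℤ) (he : e = 1 ∨ e = -1) (y : ℤ) :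
    ((⟨m, e, 0⟩ : GG)) ^ y = ⟨m * ob y, e * y, 0⟩ := by
  have h := congrArg piZ (S4 m e he y)
  rwa [map_zpow, pi_nf2, pi_nf2] at h

set_option maxHeartbeats 1000000 in
open PolyZAux in
theorem main_bwd
    (ψ : PresentedGroup polyZRelsA1 →* PresentedGroup polyZRelsA1)
    (a b c e1 e2 e3 : ℤ) (he1 : e1 = 1 ∨ e1 = -1) (he2 : e2 = 1 ∨ e2 = -1)
    (he3 : e3 = 1 ∨ e3 = -1)
    (hs1 : ψ q1 = q1 ^ e1) (hs2 : ψ q2 = q1 ^ a * q2 ^ e2)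
    (hs3 : ψ q3 = q1 ^ b * q2 ^ (2 * c) * q3 ^ e3) :
    Function.Bijective ψ := by
  have R3 : ψ q3 * ψ q2 * (ψ q3)⁻¹ * ψ q2 * (ψ q1)⁻¹ = 1 := by
    simpa [map_mul, map_inv, map_one] using congrArg ψ rel3
  rw [hs1, hs2, hs3] at R3
  have E3 := congrArg piZ R3
  simp only [map_mul, map_inv, map_one, map_zpow, pi_q1, pi_q2, pi_q3, GG.X_zpow,
    GG.Y_zpow, GG.Z_zpow] at E3
  have hsg2 : sg e2 = -1 := (sg_pm he2).1
  have hob2 : ob e2 = 1 := (sg_pm he2).2.2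
  have hsg3 : sg e3 = -1 := (sg_pm he3).1
  have hob3 : ob e3 = 1 := (sg_pm he3).2.2
  have hkey : e1 = 2 * b + e3 := by
    have h := congrArg GG.x E3
    simp [GG.mul_def, GG.inv_def, GG.one_def, hsg2, hob2, hsg3, hob3] at h
    omega
  have hf : ∀ r ∈ polyZRelsA1, FreeGroup.lift
      ![q1 ^ e1, q1 ^ (-(e1 * a)) * q2 ^ e2,
        q1 ^ (-(e1 * (e3 * b))) * q2 ^ (2 * (-(e2 * c))) * q3 ^ e3] r = 1 := by
    intro r hr
    simp only [polyZRelsA1, Set.mem_insert_iff, Set.mem_singleton_iff] at hr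
    rcases hr with rfl | rfl | rfl <;>
    · simp only [map_mul, map_inv, FreeGroup.lift_apply_of, Matrix.cons_val_zero, Matrix.cons_val_one,
        Matrix.head_cons, Matrix.cons_val_two, Matrix.tail_cons]
      apply pi_inj
      simp only [map_mul, map_inv, map_one, map_zpow, pi_q1, pi_q2, pi_q3, GG.X_zpow,
        GG.Y_zpow, GG.Z_zpow]
      ext <;>
        simp [GG.mul_def, GG.inv_def, GG.one_def, hsg2, hob2, hsg3, hob3] <;>
        rcases he1 with rfl | rfl <;> rcases he2 with rfl | rfl <;>
        rcases he3 with rfl | rfl <;> omega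
  set φ := PresentedGroup.toGroup hf with hφdef
  have hφ0 : φ q1 = q1 ^ e1 := by
    have h0 : φ q1 = _ := PresentedGroup.toGroup.of hf (x := 0)
    simpa using h0
  have hφ1 : φ q2 = q1 ^ (-(e1 * a)) * q2 ^ e2 := by
    have h0 : φ q2 = _ := PresentedGroup.toGroup.of hf (x := 1)
    simpa using h0
  have hφ2 : φ q3 = q1 ^ (-(e1 * (e3 * b))) * q2 ^ (2 * (-(e2 * c))) * q3 ^ e3 := by
    have h0 : φ q3 = _ := PresentedGroup.toGroup.of hf (x := 2)
    simpa using h0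
  have comp1a : φ (ψ q1) = q1 := by
    rw [hs1, map_zpow, hφ0, ← zpow_mul]
    apply pi_inj
    simp only [map_zpow, pi_q1, GG.X_zpow]
    ext <;> simp [GG.X] <;> rcases he1 with rfl | rfl <;> omega
  have comp1b : φ (ψ q2) = q2 := by
    rw [hs2, map_mul, map_zpow, map_zpow, hφ0, hφ1, ← zpow_mul]
    apply pi_inj
    rcases he2 with rfl | rfl <;>
      simp only [map_mul, map_zpow, map_inv, zpow_one, zpow_neg_one, pi_q1, pi_q2,
        GG.X_zpow, GG.Y_zpow] <;>
      ext <;> simp [GG.mul_def, GG.inv_def, GG.X, GG.Y] <;> rcases he1 with rfl | rfl <;> omega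
  have comp1c : φ (ψ q3) = q3 := by
    rw [hs3, map_mul, map_mul, map_zpow, map_zpow, map_zpow, hφ0, hφ1, hφ2, ← zpow_mul,
      S4 _ _ he2 (2 * c)]
    apply pi_inj
    rcases he1 with rfl | rfl <;> rcases he2 with rfl | rfl <;> rcases he3 with rfl | rfl <;>
      simp only [map_mul, map_zpow, map_inv, zpow_one, zpow_neg_one, pi_q1, pi_q2, pi_q3,
        GG.X_zpow, GG.Y_zpow, GG.Z_zpow] <;>
      ext <;>
      simp [GG.mul_def, GG.inv_def, GG.X, GG.Y, GG.Z] <;> omega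
  have comp2a : ψ (φ q1) = q1 := by
    rw [hφ0, map_zpow, hs1, ← zpow_mul]
    apply pi_inj
    simp only [map_zpow, pi_q1, GG.X_zpow]
    ext <;> simp [GG.X] <;> rcases he1 with rfl | rfl <;> omega
  have comp2b : ψ (φ q2) = q2 := by
    rw [hφ1, map_mul, map_zpow, map_zpow, hs1, hs2, ← zpow_mul]
    apply pi_inj
    rcases he2 with rfl | rfl <;>
      simp only [map_mul, map_zpow, map_inv, zpow_one, zpow_neg_one, pi_q1, pi_q2,
        GG.X_zpow, GG.Y_zpow] <;>
      ext <;> simp [GG.mul_def, GG.inv_def, GG.X, GG.Y] <;> rcases he1 with rfl | rfl <;> omega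
  have comp2c : ψ (φ q3) = q3 := by
    rw [hφ2, map_mul, map_mul, map_zpow, map_zpow, map_zpow, hs1, hs2, hs3, ← zpow_mul,
      S4 _ _ he2 (2 * (-(e2 * c)))]
    apply pi_inj
    rcases he1 with rfl | rfl <;> rcases he2 with rfl | rfl <;> rcases he3 with rfl | rfl <;>
      simp only [map_mul, map_zpow, map_inv, zpow_one, zpow_neg_one, pi_q1, pi_q2, pi_q3,
        GG.X_zpow, GG.Y_zpow, GG.Z_zpow] <;>
      ext <;>
      simp [GG.mul_def, GG.inv_def, GG.X, GG.Y, GG.Z] <;> omega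
  have hcomp1 : φ.comp ψ = MonoidHom.id _ := by
    apply PresentedGroup.ext
    intro x
    fin_cases x
    · exact comp1a
    · exact comp1b
    · exact comp1c
  have hcomp2 : ψ.comp φ = MonoidHom.id _ := by
    apply PresentedGroup.ext
    intro x
    fin_cases x
    · exact comp2a
    · exact comp2b
    · exact comp2c
  constructor
  · exact Function.LeftInverse.injective (g := ⇑φ) fun p => DFunLike.congr_fun hcomp1 p
  · exact fun p => ⟨φ p, DFunLike.congr_fun hcomp2 p⟩



/-- In `G₃ = ⟨g₁, g₂, g₃ ∣ g₂g₁ = g₁⁻¹g₂, g₃g₁ = g₁g₃, g₃g₂ = g₁g₂⁻¹g₃⟩`, a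
group homomorphism `ψ : G₃ →* G₃` is an automorphism (i.e. bijective) if and
only if there exist `a, b, c ∈ ℤ` and `ε₁, ε₂, ε₃ ∈ {1, -1}` such that
`ψ g₁ = g₁^{ε₁}`, `ψ g₂ = g₁^a g₂^{ε₂}`, and `ψ g₃ = g₁^b g₂^{2c} g₃^{ε₃}`. -/
theorem polyZ_a1_aut_characterization
    (ψ : PresentedGroup polyZRelsA1 →* PresentedGroup polyZRelsA1) :
    letI G₃ := PresentedGroup polyZRelsA1
    letI g₁ : G₃ := PresentedGroup.of 0
    letI g₂ : G₃ := PresentedGroup.of 1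
    letI g₃ : G₃ := PresentedGroup.of 2
    Function.Bijective ψ ↔
      ∃ (a b c ε₁ ε₂ ε₃ : ℤ), (ε₁ = 1 ∨ ε₁ = -1) ∧ (ε₂ = 1 ∨ ε₂ = -1) ∧
        (ε₃ = 1 ∨ ε₃ = -1) ∧
        ψ g₁ = g₁ ^ ε₁ ∧ ψ g₂ = g₁ ^ a * g₂ ^ ε₂ ∧
        ψ g₃ = g₁ ^ b * g₂ ^ (2 * c) * g₃ ^ ε₃ := by
  constructor
  · rintro ⟨hinj, hsurj⟩
    exact main_fwd ψ hinj hsurj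
  · rintro ⟨a, b, c, e1, e2, e3, he1, he2, he3, h1, h2, h3⟩
    exact main_bwd ψ a b c e1 e2 e3 he1 he2 he3 h1 h2 h3
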